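/- Let J = σ_C be the support function of a nonempty compact convex set C ⊂ ℝⁿ with 0 ∈ ri C. Then for every x₀ ∈ ℝⁿ, the closure of the descent cone 𝒟_J(x₀) equals the critical cone 𝒞_J(x₀). -/

import Mathlib

open RealInnerProductSpace

/-- Directional derivative of a convex function. -/
noncomputable def dirDeriv {n : ℕ} (J : EuclideanSpace ℝ (Fin n) → ℝ)
    (x w : EuclideanSpace ℝ (Fin n)) : ℝ :=
  sInf {r : ℝ | ∃ t : ℝ, 0 < t ∧ r = (J (x + t • w) - J x) / t}

/-- Descent cone: conical hull of `{x - x₀ : J x ≤ J x₀}`. -/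
def descentCone {n : ℕ} (J : EuclideanSpace ℝ (Fin n) → ℝ)
    (x₀ : EuclideanSpace ℝ (Fin n)) : Set (EuclideanSpace ℝ (Fin n)) :=
  {w | ∃ t : ℝ, 0 ≤ t ∧ ∃ x, J x ≤ J x₀ ∧ w = t • (x - x₀)}

/-- Critical cone: directions of nonpositive directional derivative. -/
def criticalCone {n : ℕ} (J : EuclideanSpace ℝ (Fin n) → ℝ)
    (x₀ : EuclideanSpace ℝ (Fin n)) : Set (EuclideanSpace ℝ (Fin n)) :=
  {w | dirDeriv J x₀ w ≤ 0}

/-- For the support function `J = σ_C` of a nonempty compact convex set `C` with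
`0` in the relative interior of `C`, the closure of the descent cone equals the
critical cone at every point. -/
lemma neg_smul_mem_of_intrinsicInterior {n : ℕ} {C : Set (EuclideanSpace ℝ (Fin n))}
    (h0 : (0 : EuclideanSpace ℝ (Fin n)) ∈ intrinsicInterior ℝ C)
    {v : EuclideanSpace ℝ (Fin n)} (hv : v ∈ C) :
    ∃ δ : ℝ, 0 < δ ∧ (-δ) • v ∈ C := by
  have hC0 : (0 : EuclideanSpace ℝ (Fin n)) ∈ C := intrinsicInterior_subset h0
  have h0s : (0 : EuclideanSpace ℝ (Fin n)) ∈ affineSpan ℝ C := subset_affineSpan ℝ C hC0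
  have hvs : v ∈ affineSpan ℝ C := subset_affineSpan ℝ C hv
  have hd : v ∈ (affineSpan ℝ C).direction := by
    have := AffineSubspace.vsub_mem_direction hvs h0s
    simpa using this
  have hmem : ∀ t : ℝ, t • v ∈ affineSpan ℝ C := by
    intro t
    have := AffineSubspace.vadd_mem_of_mem_direction (Submodule.smul_mem _ t hd) h0s
    simpa using this
  set g : ℝ → affineSpan ℝ C := fun t => ⟨t • v, hmem t⟩ with hg
  have hgc : Continuous g := Continuous.subtype_mk (continuous_id.smul continuous_const) _
  obtain ⟨y, hy, hy0⟩ := h0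
  have hg0 : g 0 = y := by
    apply Subtype.ext
    simp [hg, hy0]
  have hopen : IsOpen (g ⁻¹' interior ((↑) ⁻¹' C : Set (affineSpan ℝ C))) :=
    isOpen_interior.preimage hgc
  have h0mem : (0:ℝ) ∈ g ⁻¹' interior ((↑) ⁻¹' C : Set (affineSpan ℝ C)) := by
    simp only [Set.mem_preimage, hg0]; exact hy
  obtain ⟨r, hr, hball⟩ := Metric.isOpen_iff.1 hopen 0 h0mem
  refine ⟨r/2, by linarith, ?_⟩
  have : (-(r/2)) ∈ Metric.ball (0:ℝ) r := by
    simp [Real.norm_eq_abs, abs_of_nonpos]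
    rw [abs_of_pos (by linarith)]
    linarith
  have := hball this
  have h2 := interior_subset this
  simpa [hg] using h2

set_option maxHeartbeats 1000000

theorem closure_descentCone_eq_criticalCone_support
    {n : ℕ} (C : Set (EuclideanSpace ℝ (Fin n)))
    (hne : C.Nonempty) (hcomp : IsCompact C) (hconv : Convex ℝ C)
    (h0 : (0 : EuclideanSpace ℝ (Fin n)) ∈ intrinsicInterior ℝ C)
    (J : EuclideanSpace ℝ (Fin n) → ℝ)
    (hJ : ∀ x, J x = sSup ((fun v => ⟪v, x⟫) '' C)) :
    ∀ x₀ : EuclideanSpace ℝ (Fin n),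
      closure (descentCone J x₀) = criticalCone J x₀ := by
  intro x₀
  have hC0 : (0 : EuclideanSpace ℝ (Fin n)) ∈ C := intrinsicInterior_subset h0
  have hcont : ∀ x : EuclideanSpace ℝ (Fin n),
      Continuous (fun v : EuclideanSpace ℝ (Fin n) => ⟪v, x⟫) :=
    fun x => continuous_id.inner continuous_const
  have hbdd : ∀ x, BddAbove ((fun v => ⟪v, x⟫) '' C) :=
    fun x => (hcomp.image (hcont x)).bddAbove
  have hA : ∀ x, ∀ v ∈ C, ⟪v, x⟫ ≤ J x := by
    intro x v hv; rw [hJ]; exact le_csSup (hbdd x) ⟨v, hv, rfl⟩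
  have hCle : ∀ x a, (∀ v ∈ C, ⟪v, x⟫ ≤ a) → J x ≤ a := by
    intro x a h; rw [hJ]
    exact csSup_le (hne.image _) (by rintro r ⟨v, hv, rfl⟩; exact h v hv)
  have hB : ∀ x, ∃ v ∈ C, J x = ⟪v, x⟫ := by
    intro x
    obtain ⟨v, hv, hmax⟩ := hcomp.exists_isMaxOn hne (hcont x).continuousOn
    exact ⟨v, hv, le_antisymm (hCle x _ (fun u hu => hmax hu)) (hA x v hv)⟩
  have hJ0 : J 0 = 0 := by
    obtain ⟨v, hv, hvx⟩ := hB 0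
    simp [hvx]
  have hnonneg : ∀ x, 0 ≤ J x := fun x => by simpa using hA x 0 hC0
  have hhom : ∀ (t : ℝ), 0 ≤ t → ∀ x, J (t • x) = t * J x := by
    intro t ht x
    obtain ⟨v, hv, hvx⟩ := hB (t • x)
    obtain ⟨u, hu, hux⟩ := hB x
    apply le_antisymm
    · rw [hvx, real_inner_smul_right]
      exact mul_le_mul_of_nonneg_left (hA x v hv) ht
    · calc t * J x = ⟪u, t • x⟫ := by rw [hux, real_inner_smul_right]
        _ ≤ J (t • x) := hA _ u hu
  have hsub : ∀ x y, J (x + y) ≤ J x + J y := by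
    intro x y
    obtain ⟨v, hv, hvx⟩ := hB (x + y)
    rw [hvx, inner_add_right]
    exact add_le_add (hA x v hv) (hA y v hv)
  have hconvJ : ∀ (a b : EuclideanSpace ℝ (Fin n)) (l : ℝ), 0 ≤ l → l ≤ 1 →
      J (l • a + (1 - l) • b) ≤ l * J a + (1 - l) * J b := by
    intro a b l hl hl1
    obtain ⟨v, hv, hvx⟩ := hB (l • a + (1 - l) • b)
    rw [hvx, inner_add_right, real_inner_smul_right, real_inner_smul_right]
    nlinarith [hA a v hv, hA b v hv]
  obtain ⟨R, hR⟩ : ∃ R : ℝ, ∀ v ∈ C, ‖v‖ ≤ R := by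
    obtain ⟨R, hR⟩ := hcomp.isBounded.exists_norm_le
    exact ⟨R, hR⟩
  have hR0 : 0 ≤ R := le_trans (norm_nonneg _) (hR _ hne.some_mem)
  have hLip : ∀ a b, J a - J b ≤ R * ‖a - b‖ := by
    intro a b
    obtain ⟨v, hv, hvx⟩ := hB a
    have h1 : J a - J b ≤ ⟪v, a⟫ - ⟪v, b⟫ := by
      have := hA b v hv; linarith [hvx.le]
    have h2 : ⟪v, a⟫ - ⟪v, b⟫ = ⟪v, a - b⟫ := (inner_sub_right v a b).symm
    have h3 : ⟪v, a - b⟫ ≤ ‖v‖ * ‖a - b‖ := real_inner_le_norm v (a - b)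
    have h4 : ‖v‖ * ‖a - b‖ ≤ R * ‖a - b‖ :=
      mul_le_mul_of_nonneg_right (hR v hv) (norm_nonneg _)
    linarith
  have hdd : ∀ w, dirDeriv J x₀ w =
      sInf {r : ℝ | ∃ t : ℝ, 0 < t ∧ r = (J (x₀ + t • w) - J x₀) / t} := fun _ => rfl
  have hSne : ∀ w : EuclideanSpace ℝ (Fin n),
      Set.Nonempty {r : ℝ | ∃ t : ℝ, 0 < t ∧ r = (J (x₀ + t • w) - J x₀) / t} :=
    fun w => ⟨_, 1, one_pos, rfl⟩
  have hSbdd : ∀ w : EuclideanSpace ℝ (Fin n),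
      BddBelow {r : ℝ | ∃ t : ℝ, 0 < t ∧ r = (J (x₀ + t • w) - J x₀) / t} := by
    intro w
    refine ⟨-(R * ‖w‖), ?_⟩
    rintro r ⟨t, ht, rfl⟩
    rw [le_div_iff₀ ht]
    have h1 := hLip x₀ (x₀ + t • w)
    have hn : ‖x₀ - (x₀ + t • w)‖ = t * ‖w‖ := by
      rw [show x₀ - (x₀ + t • w) = -(t • w) by abel, norm_neg, norm_smul,
        Real.norm_eq_abs, abs_of_pos ht]
    nlinarith [h1, norm_nonneg w]
  apply Set.Subset.antisymm
  · -- closure ⊆ criticalCone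
    intro w hw
    show dirDeriv J x₀ w ≤ 0
    rw [hdd]
    refine le_of_forall_pos_le_add ?_
    intro ε hε
    obtain ⟨w', hw', hdist⟩ := Metric.mem_closure_iff.1 hw (ε / (R + 1)) (by positivity)
    obtain ⟨t, ht0, x, hx, rfl⟩ := hw'
    obtain ⟨t', ht', hq⟩ : ∃ t' : ℝ, 0 < t' ∧ J (x₀ + t' • (t • (x - x₀))) ≤ J x₀ := by
      rcases ht0.lt_or_eq with h | h
      · refine ⟨1/t, by positivity, ?_⟩
        rw [smul_smul, one_div_mul_cancel h.ne', one_smul, add_sub_cancel]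
        exact hx
      · refine ⟨1, one_pos, ?_⟩
        rw [← h, zero_smul, smul_zero, add_zero]
    have h1 : sInf {r : ℝ | ∃ t'' : ℝ, 0 < t'' ∧ r = (J (x₀ + t'' • w) - J x₀) / t''} ≤
        (J (x₀ + t' • w) - J x₀) / t' := csInf_le (hSbdd w) ⟨t', ht', rfl⟩
    have hnorm : ‖(x₀ + t' • w) - (x₀ + t' • (t • (x - x₀)))‖ = t' * ‖w - t • (x - x₀)‖ := by
      rw [show (x₀ + t' • w) - (x₀ + t' • (t • (x - x₀))) = t' • (w - t • (x - x₀)) by module,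
        norm_smul, Real.norm_eq_abs, abs_of_pos ht']
    have hl := hLip (x₀ + t' • w) (x₀ + t' • (t • (x - x₀)))
    rw [hnorm] at hl
    have h2 : (J (x₀ + t' • w) - J x₀) / t' ≤ R * ‖w - t • (x - x₀)‖ := by
      rw [div_le_iff₀ ht']
      nlinarith [hl, hq]
    have hd' : ‖w - t • (x - x₀)‖ < ε / (R + 1) := by
      rw [← dist_eq_norm]; exact hdist
    have h3 : R * ‖w - t • (x - x₀)‖ ≤ R * (ε / (R + 1)) :=
      mul_le_mul_of_nonneg_left hd'.le hR0
    have h4 : R * (ε / (R + 1)) ≤ ε := by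
      rw [← mul_div_assoc, div_le_iff₀ (by linarith : (0:ℝ) < R + 1)]
      nlinarith
    linarith
  · -- criticalCone ⊆ closure
    intro w hw
    have hw : sInf {r : ℝ | ∃ t : ℝ, 0 < t ∧ r = (J (x₀ + t • w) - J x₀) / t} ≤ 0 := by
      rw [← hdd]; exact hw
    by_cases hmin : ∀ x, J x₀ ≤ J x
    · apply subset_closure
      have hx₀0 : J x₀ = 0 := le_antisymm (by simpa [hJ0] using hmin 0) (hnonneg x₀)
      have hinner0 : ∀ v ∈ C, ⟪v, x₀⟫ = 0 := by
        intro v hv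
        obtain ⟨δ, hδ, hmemδ⟩ := neg_smul_mem_of_intrinsicInterior h0 hv
        have h1 : ⟪v, x₀⟫ ≤ 0 := hx₀0 ▸ hA x₀ v hv
        have h2 : ⟪(-δ) • v, x₀⟫ ≤ 0 := hx₀0 ▸ hA x₀ _ hmemδ
        rw [real_inner_smul_left] at h2
        nlinarith
      have hnegx₀ : J (-x₀) = 0 := by
        refine le_antisymm (hCle _ _ ?_) (hnonneg _)
        intro v hv
        rw [inner_neg_right, hinner0 v hv, neg_zero]
      have hlow : J w ≤ sInf {r : ℝ | ∃ t : ℝ, 0 < t ∧ r = (J (x₀ + t • w) - J x₀) / t} := by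
        apply le_csInf (hSne w)
        rintro r ⟨t, ht, rfl⟩
        rw [le_div_iff₀ ht]
        have h1 : J (t • w) ≤ J (x₀ + t • w) + J (-x₀) := by
          have := hsub (x₀ + t • w) (-x₀)
          simpa using this
        rw [hhom t ht.le w, hnegx₀, add_zero] at h1
        rw [hx₀0]
        linarith
      have hJw : J w = 0 := le_antisymm (le_trans hlow hw) (hnonneg w)
      refine ⟨1, zero_le_one, x₀ + w, ?_, by simp⟩
      calc J (x₀ + w) ≤ J x₀ + J w := hsub _ _
        _ = J x₀ := by rw [hJw, add_zero]
    · push_neg at hmin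
      obtain ⟨x₁, hx₁⟩ := hmin
      rw [Metric.mem_closure_iff]
      intro ε hε
      obtain ⟨s, hs0, hs1, hsδ⟩ :
          ∃ s : ℝ, 0 < s ∧ s < 1 ∧ s * ‖w - (x₁ - x₀)‖ < ε := by
        refine ⟨min (ε / (‖w - (x₁ - x₀)‖ + 1)) (1/2),
          lt_min (by positivity) (by norm_num),
          lt_of_le_of_lt (min_le_right _ _) (by norm_num), ?_⟩
        calc min (ε / (‖w - (x₁ - x₀)‖ + 1)) (1/2) * ‖w - (x₁ - x₀)‖
            ≤ (ε / (‖w - (x₁ - x₀)‖ + 1)) * ‖w - (x₁ - x₀)‖ :=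
              mul_le_mul_of_nonneg_right (min_le_left _ _) (norm_nonneg _)
          _ < ε := by
              rw [div_mul_eq_mul_div, div_lt_iff₀ (by positivity)]
              nlinarith [norm_nonneg (w - (x₁ - x₀))]
      have h1s : (0:ℝ) < 1 - s := by linarith
      have h1sne : (1:ℝ) - s ≠ 0 := h1s.ne'
      have hδ : 0 < J x₀ - J x₁ := by linarith
      refine ⟨(1 - s) • w + s • (x₁ - x₀), ?_, ?_⟩
      · -- membership in the descent cone
        have hε₀ : 0 < s * (J x₀ - J x₁) / (1 - s) := by positivity
        obtain ⟨r, ⟨t, ht, rfl⟩, hrlt⟩ :=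
          exists_lt_of_csInf_lt (hSne w) (lt_of_le_of_lt hw hε₀)
        obtain ⟨l, ρ, hl0, hl1, hρ0, hid1, hid2⟩ :
            ∃ l ρ : ℝ, 0 < l ∧ l ≤ 1 ∧ 0 < ρ ∧ l * t = ρ * (1 - s) ∧ 1 - l = ρ * s := by
          have hDn0 : (0:ℝ) < t * s + (1 - s) := by nlinarith
          refine ⟨(1 - s) / (t * s + (1 - s)), t / (t * s + (1 - s)),
            div_pos h1s hDn0, ?_, div_pos ht hDn0, ?_, ?_⟩
          · rw [div_le_one hDn0]; nlinarith
          · field_simp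
          · field_simp
            ring
        have hpoint : l • (x₀ + t • w) + (1 - l) • x₁ =
            x₀ + ρ • ((1 - s) • w + s • (x₁ - x₀)) := by
          match_scalars <;> linarith [hid1, hid2]
        have hcvx := hconvJ (x₀ + t • w) x₁ l hl0.le hl1
        rw [hpoint] at hcvx
        have hJtw : J (x₀ + t • w) < J x₀ + t * (s * (J x₀ - J x₁) / (1 - s)) := by
          have h := (div_lt_iff₀ ht).mp hrlt
          nlinarith [h]
        have e1 : l * J (x₀ + t • w) ≤ l * J x₀ + l * (t * (s * (J x₀ - J x₁) / (1 - s))) := by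
          nlinarith [mul_le_mul_of_nonneg_left hJtw.le hl0.le]
        have hkey : l * (t * (s * (J x₀ - J x₁) / (1 - s))) =
            ρ * s * J x₀ - ρ * s * J x₁ := by
          rw [show l * (t * (s * (J x₀ - J x₁) / (1 - s))) =
            (l * t) * (s * (J x₀ - J x₁) / (1 - s)) by ring, hid1]
          field_simp
        have e2 : (1 - l) * J x₁ = ρ * s * J x₁ := by rw [hid2]
        have e3 : l * J x₀ + ρ * s * J x₀ = J x₀ := by
          linear_combination (-(J x₀)) * hid2
        have hfin : J (x₀ + ρ • ((1 - s) • w + s • (x₁ - x₀))) ≤ J x₀ := by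
          linarith [hcvx, e1, hkey, e2, e3]
        refine ⟨1/ρ, by positivity, x₀ + ρ • ((1 - s) • w + s • (x₁ - x₀)), hfin, ?_⟩
        rw [add_sub_cancel_left, smul_smul, one_div_mul_cancel hρ0.ne', one_smul]
      · -- distance estimate
        rw [dist_eq_norm, show w - ((1 - s) • w + s • (x₁ - x₀)) = s • (w - (x₁ - x₀)) by module,
          norm_smul, Real.norm_eq_abs, abs_of_pos hs0]
        exact hsδ
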